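/- Under the Viscous Setup, there exists a constant M > 0 depending only on γ and n (independent of ε, δ, a, b, ρ̄) such that for every integer l with 0 ≤ l ≤ n−1, and for every r ∈ [a,b), sup_{t∈[0,T]} ∫_r^b ρ(t,y)^γ y^l dy ≤ M(r^{l+1−n} E₀ + ρ̄^γ b^{l+1}). -/

import Mathlib

open MeasureTheory Real Set

noncomputable section

/-- The internal energy function `h_δ(ρ) = κρ^γ/(γ-1) + δρ²`. -/
def hDelta (γ κ δ ρ : ℝ) : ℝ := κ * ρ ^ γ / (γ - 1) + δ * ρ ^ (2 : ℕ)

/-- Its derivative `h_δ'(ρ̄) = κγρ̄^{γ-1}/(γ-1) + 2δρ̄`. -/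
def hDelta' (γ κ δ ρbar : ℝ) : ℝ := κ * γ * ρbar ^ (γ - 1) / (γ - 1) + 2 * δ * ρbar

/-- Its second derivative `h_δ''(ρ) = κγρ^{γ-2} + 2δ`. -/
def hDelta'' (γ κ δ ρ : ℝ) : ℝ := κ * γ * ρ ^ (γ - 2) + 2 * δ

/-- The relative internal energy `h̄_δ(ρ,ρ̄) = h_δ(ρ) − h_δ(ρ̄) − h_δ'(ρ̄)(ρ−ρ̄)`. -/
def hBarDelta (γ κ δ ρ ρbar : ℝ) : ℝ :=
  hDelta γ κ δ ρ - hDelta γ κ δ ρbar - hDelta' γ κ δ ρbar * (ρ - ρbar)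

/-- The Viscous Setup: `n ≥ 2`, `γ > 1`, `κ = (γ−1)²/(4γ)`, `p_δ(ρ) = κρ^γ + δρ²`;
`T > 0`, `ε > 0`, `δ > 0`, `0 < a < 1 < b`, `ρ̄ > 0`; smooth functions `(ρ, m)` on
`[0,T]×[a,b]` with `ρ ≥ c_ε > 0` and `u = m/ρ`, satisfying the viscous system
`(r^{n−1}ρ)_t + (r^{n−1}m)_r = ε(r^{n−1}ρ_r)_r`,
`(r^{n−1}m)_t + (r^{n−1}m²/ρ)_r + r^{n−1}(p_δ(ρ))_r
  = ε(r^{n−1}m)_{rr} − ε((n−1)/r)(r^{n−1}m)_r` on `(0,T)×(a,b)`,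
the boundary conditions `ρ_r(t,a) = 0`, `m(t,a) = 0`, `ρ(t,b) = ρ̄`, `m(t,b) = 0`,
and the energy estimate with total energy bound `E₀`. -/
structure ViscousSetup (n : ℕ) (γ T E₀ : ℝ) where
  ε : ℝ
  δ : ℝ
  a : ℝ
  b : ℝ
  ρbar : ℝ
  cε : ℝ
  ρ : ℝ → ℝ → ℝ
  m : ℝ → ℝ → ℝ
  hn : 2 ≤ n
  hγ : 1 < γ
  hT : 0 < T
  hε : 0 < ε
  hδ : 0 < δ
  ha0 : 0 < a
  ha1 : a < 1
  hb : 1 < b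
  hρbar : 0 < ρbar
  hcε : 0 < cε
  smooth_ρ : ContDiff ℝ (⊤ : ℕ∞) (Function.uncurry ρ)
  smooth_m : ContDiff ℝ (⊤ : ℕ∞) (Function.uncurry m)
  pos : ∀ t ∈ Set.Icc 0 T, ∀ r ∈ Set.Icc a b, cε ≤ ρ t r
  continuity_eq : ∀ t ∈ Set.Ioo 0 T, ∀ r ∈ Set.Ioo a b,
    r ^ (n - 1) * deriv (fun s => ρ s r) t + deriv (fun y => y ^ (n - 1) * m t y) r
      = ε * deriv (fun y => y ^ (n - 1) * deriv (fun z => ρ t z) y) r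
  momentum_eq : ∀ t ∈ Set.Ioo 0 T, ∀ r ∈ Set.Ioo a b,
    r ^ (n - 1) * deriv (fun s => m s r) t
      + deriv (fun y => y ^ (n - 1) * (m t y) ^ (2:ℕ) / ρ t y) r
      + r ^ (n - 1) * deriv (fun y =>
          (γ - 1) ^ (2:ℕ) / (4 * γ) * (ρ t y) ^ γ + δ * (ρ t y) ^ (2:ℕ)) r
      = ε * deriv (fun y => deriv (fun z => z ^ (n - 1) * m t z) y) r
        - ε * ((n - 1 : ℝ) / r) * deriv (fun y => y ^ (n - 1) * m t y) r
  bc_ρr : ∀ t ∈ Set.Icc 0 T, deriv (fun y => ρ t y) a = 0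
  bc_ma : ∀ t ∈ Set.Icc 0 T, m t a = 0
  bc_ρb : ∀ t ∈ Set.Icc 0 T, ρ t b = ρbar
  bc_mb : ∀ t ∈ Set.Icc 0 T, m t b = 0
  energy : ∀ t ∈ Set.Icc 0 T,
    (∫ r in Set.Ioo a b,
      ((1/2) * ρ t r * (m t r / ρ t r) ^ (2:ℕ)
        + hBarDelta γ ((γ - 1) ^ (2:ℕ) / (4 * γ)) δ (ρ t r) ρbar) * r ^ (n - 1))
    + ε * ∫ s in Set.Ioo 0 T, ∫ r in Set.Ioo a b,
        (hDelta'' γ ((γ - 1) ^ (2:ℕ) / (4 * γ)) δ (ρ s r) * (deriv (fun y => ρ s y) r) ^ (2:ℕ)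
          + ρ s r * (deriv (fun y => m s y / ρ s y) r) ^ (2:ℕ)
          + (n - 1 : ℝ) * ρ s r * (m s r / ρ s r) ^ (2:ℕ) / r ^ (2:ℕ)) * r ^ (n - 1)
      ≤ E₀

lemma hBar_decomp (γ κ δ ρ ρbar : ℝ) :
    hBarDelta γ κ δ ρ ρbar
      = κ * (ρ ^ γ - ρbar ^ γ - γ * ρbar ^ (γ - 1) * (ρ - ρbar)) / (γ - 1)
        + δ * (ρ - ρbar) ^ (2 : ℕ) := by
  unfold hBarDelta hDelta hDelta'; ring

lemma G_nonneg {γ ρ ρbar : ℝ} (hγ : 1 < γ) (hρ : 0 ≤ ρ) (hρbar : 0 < ρbar) :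
    0 ≤ ρ ^ γ - ρbar ^ γ - γ * ρbar ^ (γ - 1) * (ρ - ρbar) := by
  have hne : ρbar ≠ 0 := hρbar.ne'
  have hs : (-1 : ℝ) ≤ ρ / ρbar - 1 := by
    have : 0 ≤ ρ / ρbar := div_nonneg hρ hρbar.le
    linarith
  have key := one_add_mul_self_le_rpow_one_add hs hγ.le
  rw [show (1 : ℝ) + (ρ / ρbar - 1) = ρ / ρbar by ring,
    div_rpow hρ hρbar.le] at key
  have hpos : (0 : ℝ) < ρbar ^ γ := rpow_pos_of_pos hρbar γ
  have key' : (1 + γ * (ρ / ρbar - 1)) * ρbar ^ γ ≤ ρ ^ γ := by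
    calc (1 + γ * (ρ / ρbar - 1)) * ρbar ^ γ
        ≤ ρ ^ γ / ρbar ^ γ * ρbar ^ γ := mul_le_mul_of_nonneg_right key hpos.le
      _ = ρ ^ γ := div_mul_cancel₀ _ hpos.ne'
  have h3 : ρbar ^ (γ - 1) * ρbar = ρbar ^ γ := by
    rw [← Real.rpow_add_one hne, sub_add_cancel]
  have hexp : (1 + γ * (ρ / ρbar - 1)) * ρbar ^ γ
      = ρbar ^ γ + γ * ρbar ^ (γ - 1) * (ρ - ρbar) := by
    rw [← h3]; field_simp
  rw [hexp] at key'
  linarith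

lemma hBar_nonneg {γ δ ρ ρbar : ℝ} (hγ : 1 < γ) (hδ : 0 ≤ δ) (hρ : 0 ≤ ρ)
    (hρbar : 0 < ρbar) :
    0 ≤ hBarDelta γ ((γ - 1) ^ (2 : ℕ) / (4 * γ)) δ ρ ρbar := by
  rw [hBar_decomp]
  have h1 : (0 : ℝ) < γ - 1 := by linarith
  have h3 := G_nonneg hγ hρ hρbar
  positivity

lemma ptwise {γ δ ρ ρbar : ℝ} (hγ : 1 < γ) (hδ : 0 ≤ δ) (hρ : 0 < ρ) (hρbar : 0 < ρbar) :
    ρ ^ γ ≤ (8 * γ / (γ - 1)) * hBarDelta γ ((γ - 1) ^ (2 : ℕ) / (4 * γ)) δ ρ ρbar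
      + (2 * γ) ^ (γ / (γ - 1)) * ρbar ^ γ := by
  have h1 : (0 : ℝ) < γ - 1 := by linarith
  have hγ0 : (0 : ℝ) < γ := by linarith
  have h2γ : (0 : ℝ) < 2 * γ := by linarith
  have hG := G_nonneg hγ hρ.le hρbar
  set G : ℝ := ρ ^ γ - ρbar ^ γ - γ * ρbar ^ (γ - 1) * (ρ - ρbar) with hGdef
  have hc1 : (0 : ℝ) < 8 * γ / (γ - 1) := by positivity
  have hC2 : (0 : ℝ) < (2 * γ) ^ (γ / (γ - 1)) * ρbar ^ γ :=
    mul_pos (rpow_pos_of_pos h2γ _) (rpow_pos_of_pos hρbar _)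
  have hBar_ge : 2 * G ≤
      (8 * γ / (γ - 1)) * hBarDelta γ ((γ - 1) ^ (2 : ℕ) / (4 * γ)) δ ρ ρbar := by
    rw [hBar_decomp, ← hGdef]
    have hsq : 0 ≤ δ * (ρ - ρbar) ^ (2 : ℕ) := by positivity
    have heq : (8 * γ / (γ - 1)) * ((γ - 1) ^ (2 : ℕ) * G / (4 * γ) / (γ - 1)) = 2 * G := by
      field_simp; ring
    have : (γ - 1) ^ (2 : ℕ) / (4 * γ) * G / (γ - 1)
        = (γ - 1) ^ (2 : ℕ) * G / (4 * γ) / (γ - 1) := by ring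
    rw [mul_add, this, heq]
    nlinarith [mul_le_mul_of_nonneg_left hsq hc1.le]
  set K : ℝ := (2 * γ) ^ (γ - 1)⁻¹ with hKdef
  have hKpos : 0 < K := rpow_pos_of_pos h2γ _
  have hK1 : K ^ (γ - 1) = 2 * γ := by
    rw [hKdef, ← Real.rpow_mul h2γ.le, inv_mul_cancel₀ h1.ne', rpow_one]
  have hKγ : K ^ γ = (2 * γ) ^ (γ / (γ - 1)) := by
    rw [hKdef, ← Real.rpow_mul h2γ.le, inv_mul_eq_div]
  rcases le_or_gt ρ (K * ρbar) with hcase | hcase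
  · have hmono := Real.rpow_le_rpow hρ.le hcase hγ0.le
    rw [Real.mul_rpow hKpos.le hρbar.le, hKγ] at hmono
    linarith
  · have hρb_lt : ρbar ≤ ρ / K := by
      rw [le_div_iff₀ hKpos]
      nlinarith
    have h4 : ρbar ^ (γ - 1) ≤ (ρ / K) ^ (γ - 1) :=
      Real.rpow_le_rpow hρbar.le hρb_lt h1.le
    have h5 : (ρ / K) ^ (γ - 1) = ρ ^ (γ - 1) / (2 * γ) := by
      rw [Real.div_rpow hρ.le hKpos.le, hK1]
    have h6 : ρ ^ (γ - 1) * ρ = ρ ^ γ := by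
      rw [← Real.rpow_add_one hρ.ne', sub_add_cancel]
    have h7 : γ * (ρbar ^ (γ - 1) * ρ) ≤ ρ ^ γ / 2 := by
      have ha : ρbar ^ (γ - 1) * ρ ≤ ρ ^ (γ - 1) / (2 * γ) * ρ :=
        mul_le_mul_of_nonneg_right (h4.trans_eq h5) hρ.le
      have hb : γ * (ρ ^ (γ - 1) / (2 * γ) * ρ) = ρ ^ γ / 2 := by
        rw [← h6]; field_simp
      calc γ * (ρbar ^ (γ - 1) * ρ) ≤ γ * (ρ ^ (γ - 1) / (2 * γ) * ρ) :=
            mul_le_mul_of_nonneg_left ha hγ0.le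
        _ = ρ ^ γ / 2 := hb
    have h8 : ρbar ^ (γ - 1) * ρbar = ρbar ^ γ := by
      rw [← Real.rpow_add_one hρbar.ne', sub_add_cancel]
    have hGexp : G = ρ ^ γ + (γ - 1) * ρbar ^ γ - γ * (ρbar ^ (γ - 1) * ρ) := by
      rw [hGdef, ← h8]; ring
    have hbγ : 0 ≤ ρbar ^ γ := (rpow_pos_of_pos hρbar γ).le
    have h9 : ρ ^ γ ≤ 2 * G := by
      rw [hGexp]
      nlinarith [mul_nonneg h1.le hbγ]
    linarith

set_option maxHeartbeats 1600000 in
/-- under the Viscous Setup there is `M > 0` depending only on `γ` and `n`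
(independent of `ε, δ, a, b, ρ̄, T, E₀`) such that for every `0 ≤ l ≤ n−1` and `r ∈ [a,b)`,
`sup_{t∈[0,T]} ∫_r^b ρ(t,y)^γ y^l dy ≤ M(r^{l+1−n} E₀ + ρ̄^γ b^{l+1})`. -/
theorem rho_gamma_weighted_bound (n : ℕ) (hn : 2 ≤ n) (γ : ℝ) (hγ : 1 < γ) :
    ∃ M : ℝ, 0 < M ∧ ∀ T E₀ : ℝ, ∀ S : ViscousSetup n γ T E₀,
      ∀ l : ℕ, l ≤ n - 1 → ∀ r ∈ Set.Ico S.a S.b, ∀ t ∈ Set.Icc 0 T,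
        (∫ y in Set.Ioo r S.b, (S.ρ t y) ^ γ * y ^ l)
          ≤ M * (r ^ ((l : ℝ) + 1 - n) * E₀ + S.ρbar ^ γ * S.b ^ (l + 1)) := by
  have h1 : (0 : ℝ) < γ - 1 := by linarith
  have hγ0 : (0 : ℝ) < γ := by linarith
  have h2γ : (0 : ℝ) < 2 * γ := by linarith
  have hc1 : (0 : ℝ) < 8 * γ / (γ - 1) := by positivity
  have hc2 : (0 : ℝ) < (2 * γ) ^ (γ / (γ - 1)) := rpow_pos_of_pos h2γ _
  refine ⟨8 * γ / (γ - 1) + (2 * γ) ^ (γ / (γ - 1)), by positivity, ?_⟩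
  intro T E₀ S l hl r hr t ht
  have hb1 : (1 : ℝ) < S.b := S.hb
  have hb0 : (0 : ℝ) < S.b := by linarith
  have ha0 := S.ha0
  have hab : S.a < S.b := lt_trans S.ha1 S.hb
  have hr0 : 0 < r := lt_of_lt_of_le ha0 hr.1
  have hrb : r < S.b := hr.2
  have hn1 : (0 : ℝ) ≤ (n : ℝ) - 1 := by
    have : (1 : ℝ) ≤ (n : ℝ) := by exact_mod_cast (by omega : 1 ≤ n)
    linarith
  have hρpos : ∀ y ∈ Icc S.a S.b, 0 < S.ρ t y :=
    fun y hy => lt_of_lt_of_le S.hcε (S.pos t ht y hy)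
  have hρc : Continuous (fun y => S.ρ t y) :=
    S.smooth_ρ.continuous.comp (Continuous.prodMk_right t)
  have hmc : Continuous (fun y => S.m t y) :=
    S.smooth_m.continuous.comp (Continuous.prodMk_right t)
  have hρne : ∀ y ∈ Icc S.a S.b, S.ρ t y ≠ 0 := fun y hy => (hρpos y hy).ne'
  -- continuity of the weighted relative energy density
  have hrg : ContinuousOn (fun y => (S.ρ t y) ^ γ) (Icc S.a S.b) :=
    hρc.continuousOn.rpow_const (fun y hy => Or.inl (hρne y hy))
  have hHc : ContinuousOn
      (fun y => hBarDelta γ ((γ - 1) ^ (2 : ℕ) / (4 * γ)) S.δ (S.ρ t y) S.ρbar)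
      (Icc S.a S.b) := by
    simp only [hBarDelta, hDelta, hDelta']
    exact ((((continuousOn_const.mul hrg).div_const _).add
        (continuousOn_const.mul (hρc.continuousOn.pow 2))).sub continuousOn_const).sub
        (continuousOn_const.mul (hρc.continuousOn.sub continuousOn_const))
  have hHw_int : IntegrableOn
      (fun y => hBarDelta γ ((γ - 1) ^ (2 : ℕ) / (4 * γ)) S.δ (S.ρ t y) S.ρbar * y ^ (n - 1))
      (Icc S.a S.b) :=
    (hHc.mul (continuous_pow (n - 1)).continuousOn).integrableOn_Icc
  have hF_int : IntegrableOn
      (fun y => ((1/2) * S.ρ t y * (S.m t y / S.ρ t y) ^ (2:ℕ)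
        + hBarDelta γ ((γ - 1) ^ (2:ℕ) / (4 * γ)) S.δ (S.ρ t y) S.ρbar) * y ^ (n - 1))
      (Icc S.a S.b) := by
    refine ContinuousOn.integrableOn_Icc ?_
    exact (((continuousOn_const.mul hρc.continuousOn).mul
      ((hmc.continuousOn.div hρc.continuousOn hρne).pow 2)).add hHc).mul
      (continuous_pow (n - 1)).continuousOn
  -- nonnegativity of the dissipation double integral
  have hE := S.energy t ht
  have hDiss : 0 ≤ ∫ s in Set.Ioo 0 T, ∫ y in Set.Ioo S.a S.b,
      (hDelta'' γ ((γ - 1) ^ (2:ℕ) / (4 * γ)) S.δ (S.ρ s y)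
          * (deriv (fun z => S.ρ s z) y) ^ (2:ℕ)
        + S.ρ s y * (deriv (fun z => S.m s z / S.ρ s z) y) ^ (2:ℕ)
        + (n - 1 : ℝ) * S.ρ s y * (S.m s y / S.ρ s y) ^ (2:ℕ) / y ^ (2:ℕ)) * y ^ (n - 1) := by
    refine setIntegral_nonneg measurableSet_Ioo (fun s hs => ?_)
    refine setIntegral_nonneg measurableSet_Ioo (fun y hy => ?_)
    have hρsy : 0 < S.ρ s y :=
      lt_of_lt_of_le S.hcε (S.pos s ⟨hs.1.le, hs.2.le⟩ y ⟨hy.1.le, hy.2.le⟩)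
    have hy0 : 0 < y := lt_trans ha0 hy.1
    refine mul_nonneg ?_ (pow_nonneg hy0.le _)
    have t1 : 0 ≤ hDelta'' γ ((γ - 1) ^ (2:ℕ) / (4 * γ)) S.δ (S.ρ s y) := by
      unfold hDelta''
      have hk : 0 ≤ (γ - 1) ^ (2:ℕ) / (4 * γ) * γ * (S.ρ s y) ^ (γ - 2) :=
        mul_nonneg (mul_nonneg (by positivity) hγ0.le) (rpow_nonneg hρsy.le _)
      linarith [S.hδ.le]
    refine add_nonneg (add_nonneg (mul_nonneg t1 (sq_nonneg _))
      (mul_nonneg hρsy.le (sq_nonneg _))) ?_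
    exact div_nonneg (mul_nonneg (mul_nonneg hn1 hρsy.le) (sq_nonneg _))
      (pow_nonneg hy0.le _)
  have hFE : (∫ y in Set.Ioo S.a S.b,
      ((1/2) * S.ρ t y * (S.m t y / S.ρ t y) ^ (2:ℕ)
        + hBarDelta γ ((γ - 1) ^ (2:ℕ) / (4 * γ)) S.δ (S.ρ t y) S.ρbar) * y ^ (n - 1)) ≤ E₀ := by
    nlinarith [mul_nonneg S.hε.le hDiss]
  -- F is nonneg, hence E₀ ≥ 0
  have hA : ∀ y ∈ Icc S.a S.b,
      0 ≤ (1/2) * S.ρ t y * (S.m t y / S.ρ t y) ^ (2:ℕ) := fun y hy =>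
    mul_nonneg (mul_nonneg (by norm_num) (hρpos y hy).le) (sq_nonneg _)
  have hH0 : ∀ y ∈ Icc S.a S.b,
      0 ≤ hBarDelta γ ((γ - 1) ^ (2:ℕ) / (4 * γ)) S.δ (S.ρ t y) S.ρbar := fun y hy =>
    hBar_nonneg hγ S.hδ.le (hρpos y hy).le S.hρbar
  have hE0 : 0 ≤ E₀ := by
    refine le_trans (setIntegral_nonneg measurableSet_Ioo (fun y hy => ?_)) hFE
    have hy' : y ∈ Icc S.a S.b := Ioo_subset_Icc_self hy
    have hy0 : 0 < y := lt_trans ha0 hy.1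
    exact mul_nonneg (add_nonneg (hA y hy') (hH0 y hy')) (pow_nonneg hy0.le _)
  -- ∫_{(a,b)} h̄ y^{n-1} ≤ ∫ F ≤ E₀
  have hHF : (∫ y in Set.Ioo S.a S.b,
        hBarDelta γ ((γ - 1) ^ (2:ℕ) / (4 * γ)) S.δ (S.ρ t y) S.ρbar * y ^ (n - 1))
      ≤ ∫ y in Set.Ioo S.a S.b,
        ((1/2) * S.ρ t y * (S.m t y / S.ρ t y) ^ (2:ℕ)
          + hBarDelta γ ((γ - 1) ^ (2:ℕ) / (4 * γ)) S.δ (S.ρ t y) S.ρbar) * y ^ (n - 1) := by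
    refine setIntegral_mono_on (hHw_int.mono_set Ioo_subset_Icc_self)
      (hF_int.mono_set Ioo_subset_Icc_self) measurableSet_Ioo (fun y hy => ?_)
    have hy' : y ∈ Icc S.a S.b := Ioo_subset_Icc_self hy
    have hy0 : 0 < y := lt_trans ha0 hy.1
    nlinarith [mul_nonneg (hA y hy') (pow_nonneg hy0.le (n - 1))]
  have hsub : Set.Ioo r S.b ⊆ Icc S.a S.b := fun y hy => ⟨le_trans hr.1 hy.1.le, hy.2.le⟩
  have hmono_set : (∫ y in Set.Ioo r S.b,
        hBarDelta γ ((γ - 1) ^ (2:ℕ) / (4 * γ)) S.δ (S.ρ t y) S.ρbar * y ^ (n - 1))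
      ≤ ∫ y in Set.Ioo S.a S.b,
        hBarDelta γ ((γ - 1) ^ (2:ℕ) / (4 * γ)) S.δ (S.ρ t y) S.ρbar * y ^ (n - 1) := by
    refine setIntegral_mono_set (hHw_int.mono_set Ioo_subset_Icc_self) ?_
      ((Ioo_subset_Ioo_left hr.1).eventuallyLE)
    refine (ae_restrict_iff' measurableSet_Ioo).mpr (Filter.Eventually.of_forall fun y hy => ?_)
    have hy' : y ∈ Icc S.a S.b := Ioo_subset_Icc_self hy
    have hy0 : 0 < y := lt_trans ha0 hy.1
    exact mul_nonneg (hH0 y hy') (pow_nonneg hy0.le _)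
  have hmid : (∫ y in Set.Ioo r S.b,
      hBarDelta γ ((γ - 1) ^ (2:ℕ) / (4 * γ)) S.δ (S.ρ t y) S.ρbar * y ^ (n - 1)) ≤ E₀ :=
    le_trans hmono_set (le_trans hHF hFE)
  -- pointwise bound on (r, b)
  have hexp : (l : ℝ) + 1 - (n : ℝ) ≤ 0 := by
    have hln : l + 1 ≤ n := by omega
    have : ((l : ℝ) + 1) ≤ (n : ℝ) := by exact_mod_cast hln
    linarith
  have hcast : ((n - 1 : ℕ) : ℝ) = (n : ℝ) - 1 := by
    have := Nat.cast_sub (show 1 ≤ n by omega) (R := ℝ)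
    simpa using this
  have key1 : ∀ y ∈ Set.Ioo r S.b, (S.ρ t y) ^ γ * y ^ l
      ≤ (8 * γ / (γ - 1)) * r ^ ((l : ℝ) + 1 - (n : ℝ))
          * (hBarDelta γ ((γ - 1) ^ (2:ℕ) / (4 * γ)) S.δ (S.ρ t y) S.ρbar * y ^ (n - 1))
        + (2 * γ) ^ (γ / (γ - 1)) * S.ρbar ^ γ * S.b ^ l := by
    intro y hy
    have hy' : y ∈ Icc S.a S.b := hsub hy
    have hy0 : 0 < y := lt_trans hr0 hy.1
    have hmain := ptwise (δ := S.δ) (ρ := S.ρ t y) (ρbar := S.ρbar) hγ S.hδ.le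
      (hρpos y hy') S.hρbar
    have e3 : ((l : ℝ) + 1 - (n : ℝ)) + ((n : ℝ) - 1) = (l : ℝ) := by ring
    have hyl : (y : ℝ) ^ l = y ^ ((l : ℝ) + 1 - (n : ℝ)) * y ^ ((n : ℝ) - 1) := by
      rw [← Real.rpow_add hy0, e3, Real.rpow_natCast]
    have hyn : y ^ ((n : ℝ) - 1) = (y : ℝ) ^ (n - 1 : ℕ) := by
      rw [← hcast, Real.rpow_natCast]
    have hstep : (y : ℝ) ^ l ≤ r ^ ((l : ℝ) + 1 - (n : ℝ)) * y ^ (n - 1 : ℕ) := by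
      rw [hyl, ← hyn]
      exact mul_le_mul_of_nonneg_right
        (Real.rpow_le_rpow_of_nonpos hr0 hy.1.le hexp) (rpow_nonneg hy0.le _)
    have p1 : (S.ρ t y) ^ γ * y ^ l
        ≤ ((8 * γ / (γ - 1)) * hBarDelta γ ((γ - 1) ^ (2:ℕ) / (4 * γ)) S.δ (S.ρ t y) S.ρbar
            + (2 * γ) ^ (γ / (γ - 1)) * S.ρbar ^ γ) * y ^ l :=
      mul_le_mul_of_nonneg_right hmain (pow_nonneg hy0.le l)
    have hHy0 := hH0 y hy'
    have p2 : hBarDelta γ ((γ - 1) ^ (2:ℕ) / (4 * γ)) S.δ (S.ρ t y) S.ρbar * y ^ l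
        ≤ hBarDelta γ ((γ - 1) ^ (2:ℕ) / (4 * γ)) S.δ (S.ρ t y) S.ρbar
          * (r ^ ((l : ℝ) + 1 - (n : ℝ)) * y ^ (n - 1 : ℕ)) :=
      mul_le_mul_of_nonneg_left hstep hHy0
    have p3 : S.ρbar ^ γ * y ^ l ≤ S.ρbar ^ γ * S.b ^ l :=
      mul_le_mul_of_nonneg_left (pow_le_pow_left₀ hy0.le hy.2.le l)
        (rpow_nonneg S.hρbar.le γ)
    nlinarith [mul_le_mul_of_nonneg_left p2 hc1.le, mul_le_mul_of_nonneg_left p3 hc2.le]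
  -- integrate
  have hlhs_int : IntegrableOn (fun y => (S.ρ t y) ^ γ * y ^ l) (Set.Ioo r S.b) :=
    ((hrg.mul (continuous_pow l).continuousOn).integrableOn_Icc).mono_set hsub
  have hgi1 : IntegrableOn (fun y => (8 * γ / (γ - 1)) * r ^ ((l : ℝ) + 1 - (n : ℝ))
      * (hBarDelta γ ((γ - 1) ^ (2:ℕ) / (4 * γ)) S.δ (S.ρ t y) S.ρbar * y ^ (n - 1)))
      (Set.Ioo r S.b) := by
    have := ((hHw_int.mono_set hsub).const_mul
      ((8 * γ / (γ - 1)) * r ^ ((l : ℝ) + 1 - (n : ℝ))))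
    simp only [mul_assoc] at this ⊢; exact this
  have hgi2 : IntegrableOn
      (fun _ : ℝ => (2 * γ) ^ (γ / (γ - 1)) * S.ρbar ^ γ * S.b ^ l) (Set.Ioo r S.b) :=
    integrableOn_const measure_Ioo_lt_top.ne
  have step1 : (∫ y in Set.Ioo r S.b, (S.ρ t y) ^ γ * y ^ l)
      ≤ ∫ y in Set.Ioo r S.b, ((8 * γ / (γ - 1)) * r ^ ((l : ℝ) + 1 - (n : ℝ))
          * (hBarDelta γ ((γ - 1) ^ (2:ℕ) / (4 * γ)) S.δ (S.ρ t y) S.ρbar * y ^ (n - 1))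
        + (2 * γ) ^ (γ / (γ - 1)) * S.ρbar ^ γ * S.b ^ l) :=
    setIntegral_mono_on hlhs_int (hgi1.add hgi2) measurableSet_Ioo key1
  have hsplit : (∫ y in Set.Ioo r S.b, ((8 * γ / (γ - 1)) * r ^ ((l : ℝ) + 1 - (n : ℝ))
          * (hBarDelta γ ((γ - 1) ^ (2:ℕ) / (4 * γ)) S.δ (S.ρ t y) S.ρbar * y ^ (n - 1))
        + (2 * γ) ^ (γ / (γ - 1)) * S.ρbar ^ γ * S.b ^ l))
      = (8 * γ / (γ - 1)) * r ^ ((l : ℝ) + 1 - (n : ℝ))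
          * (∫ y in Set.Ioo r S.b,
              hBarDelta γ ((γ - 1) ^ (2:ℕ) / (4 * γ)) S.δ (S.ρ t y) S.ρbar * y ^ (n - 1))
        + (2 * γ) ^ (γ / (γ - 1)) * S.ρbar ^ γ * S.b ^ l * (S.b - r) := by
    rw [integral_add hgi1 hgi2, integral_const_mul, setIntegral_const]
    simp [Real.volume_Ioo, ENNReal.toReal_ofReal (by linarith : (0:ℝ) ≤ S.b - r),
      smul_eq_mul, max_eq_left (by linarith : (0:ℝ) ≤ S.b - r)]
    ring
  have hR0 : (0 : ℝ) < r ^ ((l : ℝ) + 1 - (n : ℝ)) := rpow_pos_of_pos hr0 _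
  have hfin1 : (8 * γ / (γ - 1)) * r ^ ((l : ℝ) + 1 - (n : ℝ))
      * (∫ y in Set.Ioo r S.b,
          hBarDelta γ ((γ - 1) ^ (2:ℕ) / (4 * γ)) S.δ (S.ρ t y) S.ρbar * y ^ (n - 1))
      ≤ (8 * γ / (γ - 1)) * r ^ ((l : ℝ) + 1 - (n : ℝ)) * E₀ :=
    mul_le_mul_of_nonneg_left hmid (mul_nonneg hc1.le hR0.le)
  have hfin2 : (2 * γ) ^ (γ / (γ - 1)) * S.ρbar ^ γ * S.b ^ l * (S.b - r)
      ≤ (2 * γ) ^ (γ / (γ - 1)) * (S.ρbar ^ γ * S.b ^ (l + 1)) := by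
    have hbb : S.b - r ≤ S.b := by linarith
    have h0 : 0 ≤ (2 * γ) ^ (γ / (γ - 1)) * S.ρbar ^ γ * S.b ^ l :=
      mul_nonneg (mul_nonneg hc2.le (rpow_nonneg S.hρbar.le _)) (pow_nonneg hb0.le _)
    calc (2 * γ) ^ (γ / (γ - 1)) * S.ρbar ^ γ * S.b ^ l * (S.b - r)
        ≤ (2 * γ) ^ (γ / (γ - 1)) * S.ρbar ^ γ * S.b ^ l * S.b :=
          mul_le_mul_of_nonneg_left hbb h0
      _ = (2 * γ) ^ (γ / (γ - 1)) * (S.ρbar ^ γ * S.b ^ (l + 1)) := by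
          rw [pow_succ]; ring
  have hX : 0 ≤ r ^ ((l : ℝ) + 1 - (n : ℝ)) * E₀ := mul_nonneg hR0.le hE0
  have hY : 0 ≤ S.ρbar ^ γ * S.b ^ (l + 1) :=
    mul_nonneg (rpow_nonneg S.hρbar.le _) (pow_nonneg hb0.le _)
  nlinarith [step1, hsplit, hfin1, hfin2, mul_nonneg hc1.le hY, mul_nonneg hc2.le hX]
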